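/- Let H be a complex Hilbert space and T ∈ B(H). The following are equivalent: (i) T is a 2-isometry (B₂(T) = 0); (ii) T is completely hyperexpansive (B_m(T) ≤ 0 for all m ∈ ℕ) and CPD; (iii) T is 2-hyperexpansive (B₂(T) ≤ 0) and CPD. -/

import Mathlib

open MeasureTheory Filter Topology ContinuousLinearMap
open scoped ComplexOrder

noncomputable section

/-- A real sequence `γ` is *conditionally positive definite* (CPD) if
`∑_{i,j=0}^k γ_{i+j} λ_i conj(λ_j) ≥ 0` for all finite sequences `λ_0, …, λ_k` of complex
numbers with `∑_{i=0}^k λ_i = 0`. -/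
def IsCPDSeq (γ : ℕ → ℝ) : Prop :=
  ∀ (k : ℕ) (l : ℕ → ℂ), ∑ i ∈ Finset.range (k + 1), l i = 0 →
    0 ≤ ∑ i ∈ Finset.range (k + 1), ∑ j ∈ Finset.range (k + 1),
        (γ (i + j) : ℂ) * l i * (starRingEnd ℂ) (l j)

/-- An operator `T ∈ B(H)` is *conditionally positive definite* (CPD) if for every `h ∈ H` the
sequence `{‖Tⁿh‖²}ₙ` is CPD. -/
def IsCPDOp {H : Type*} [NormedAddCommGroup H] [InnerProductSpace ℂ H] [CompleteSpace H]
    (T : H →L[ℂ] H) : Prop :=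
  ∀ h : H, IsCPDSeq fun n => ‖(T ^ n) h‖ ^ 2

/-- The operator `B_m(T) = ∑_{k=0}^m (-1)^k (m choose k) T^{*k} Tᵏ`. -/
def bOp {H : Type*} [NormedAddCommGroup H] [InnerProductSpace ℂ H] [CompleteSpace H]
    (T : H →L[ℂ] H) (m : ℕ) : H →L[ℂ] H :=
  ∑ k ∈ Finset.range (m + 1),
    ((-1 : ℂ) ^ k * (m.choose k : ℂ)) • (adjoint (T ^ k) * T ^ k)

/- ### Auxiliary lemmas -/

lemma altS0 {m : ℕ} (hm : m ≠ 0) :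
    ∑ k ∈ Finset.range (m + 1), (-1 : ℝ) ^ k * m.choose k = 0 := by
  have h := Int.alternating_sum_range_choose_of_ne hm
  have h2 : ((∑ i ∈ Finset.range (m + 1), (-1 : ℤ) ^ i * m.choose i : ℤ) : ℝ) = 0 := by
    rw [h]; simp
  push_cast at h2
  convert h2 using 1

lemma altS1 {m : ℕ} (hm : 2 ≤ m) :
    ∑ k ∈ Finset.range (m + 1), (-1 : ℝ) ^ k * k * m.choose k = 0 := by
  obtain ⟨m', rfl⟩ : ∃ m', m = m' + 1 := ⟨m - 1, by omega⟩
  have hm' : m' ≠ 0 := by omega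
  rw [Finset.sum_range_succ']
  have h1 : ∀ j : ℕ, (-1 : ℝ) ^ (j + 1) * (↑(j + 1)) * ((m' + 1).choose (j + 1)) =
      -((m' + 1 : ℝ) * ((-1 : ℝ) ^ j * m'.choose j)) := by
    intro j
    have h2 : (((m' + 1).choose (j + 1) : ℝ)) * (j + 1) = (m' + 1) * (m'.choose j : ℝ) := by
      exact_mod_cast congrArg (Nat.cast : ℕ → ℝ) (Nat.add_one_mul_choose_eq m' j).symm
    rw [pow_succ]
    push_cast
    linear_combination (-(-1 : ℝ) ^ j) * h2
  simp only [h1]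
  rw [Finset.sum_neg_distrib, ← Finset.mul_sum, altS0 hm']
  simp

/-- Any affine sequence is conditionally positive definite. -/
lemma isCPDSeq_affine (a b : ℝ) : IsCPDSeq fun n => a + n * b := by
  intro k l hl
  show 0 ≤ ∑ i ∈ Finset.range (k + 1), ∑ j ∈ Finset.range (k + 1),
      ((a + ((i + j : ℕ) : ℝ) * b : ℝ) : ℂ) * l i * (starRingEnd ℂ) (l j)
  have hconj : ∑ j ∈ Finset.range (k + 1), (starRingEnd ℂ) (l j) = 0 := by
    rw [← map_sum, hl, map_zero]
  have step : ∀ i ∈ Finset.range (k + 1),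
      ∑ j ∈ Finset.range (k + 1),
        ((a + ((i + j : ℕ) : ℝ) * b : ℝ) : ℂ) * l i * (starRingEnd ℂ) (l j)
      = ((a : ℂ) + i * b) * l i * (∑ j ∈ Finset.range (k + 1), (starRingEnd ℂ) (l j))
        + l i * (∑ j ∈ Finset.range (k + 1), ((b : ℂ) * j) * (starRingEnd ℂ) (l j)) := by
    intro i _
    rw [Finset.mul_sum, Finset.mul_sum, ← Finset.sum_add_distrib]
    refine Finset.sum_congr rfl fun j _ => ?_
    push_cast
    ring
  have htot : ∑ i ∈ Finset.range (k + 1), ∑ j ∈ Finset.range (k + 1),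
      ((a + ((i + j : ℕ) : ℝ) * b : ℝ) : ℂ) * l i * (starRingEnd ℂ) (l j) = 0 := by
    rw [Finset.sum_congr rfl step]
    simp only [hconj, mul_zero, zero_add]
    rw [← Finset.sum_mul, hl, zero_mul]
  rw [htot]

section OpLemmas

variable {H : Type*} [NormedAddCommGroup H] [InnerProductSpace ℂ H] [CompleteSpace H]

lemma inner_bOp (T : H →L[ℂ] H) (m : ℕ) (h : H) :
    @inner ℂ H _ ((bOp T m) h) h
      = ((∑ k ∈ Finset.range (m + 1), (-1 : ℝ) ^ k * m.choose k * ‖(T ^ k) h‖ ^ 2 : ℝ) : ℂ) := by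
  push_cast
  simp only [bOp, ContinuousLinearMap.sum_apply, ContinuousLinearMap.smul_apply,
    ContinuousLinearMap.mul_apply, sum_inner, inner_smul_left]
  refine Finset.sum_congr rfl fun k _ => ?_
  rw [ContinuousLinearMap.adjoint_inner_left, @inner_self_eq_norm_sq_to_K ℂ]
  simp [map_mul, map_pow]

lemma bOp_isSelfAdjoint (T : H →L[ℂ] H) (m : ℕ) : IsSelfAdjoint (bOp T m) := by
  rw [IsSelfAdjoint]
  simp only [bOp, star_sum, star_smul, star_mul, ContinuousLinearMap.star_eq_adjoint,
    adjoint_adjoint]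
  refine Finset.sum_congr rfl fun k _ => ?_
  congr 1
  simp [star_pow, mul_comm]

/-- If `B₂(T) = 0`, then for every `h` the sequence `n ↦ ‖Tⁿh‖²` is affine with
nonnegative slope. -/
lemma affine_of_bOp_two_eq_zero (T : H →L[ℂ] H) (hB : bOp T 2 = 0) (h : H) :
    (∀ n : ℕ, ‖(T ^ n) h‖ ^ 2 = ‖h‖ ^ 2 + n * (‖T h‖ ^ 2 - ‖h‖ ^ 2)) ∧
      0 ≤ ‖T h‖ ^ 2 - ‖h‖ ^ 2 := by
  have hrec : ∀ x : H, ‖x‖ ^ 2 - 2 * ‖T x‖ ^ 2 + ‖(T ^ 2) x‖ ^ 2 = 0 := by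
    intro x
    have h1 : @inner ℂ H _ ((bOp T 2) x) x = 0 := by rw [hB]; simp
    rw [inner_bOp] at h1
    have h2 : (∑ k ∈ Finset.range 3, (-1 : ℝ) ^ k * ((2 : ℕ).choose k) * ‖(T ^ k) x‖ ^ 2) = 0 := by
      exact_mod_cast h1
    rw [Finset.sum_range_succ, Finset.sum_range_succ, Finset.sum_range_succ,
      Finset.sum_range_zero] at h2
    norm_num [pow_one] at h2
    have e : (T ^ 2) x = T (T x) := by rw [pow_two]; rfl
    rw [e]
    linarith [h2]
  have hpow : ∀ k n : ℕ, (T ^ k) ((T ^ n) h) = (T ^ (k + n)) h := by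
    intro k n
    rw [pow_add]
    rfl
  set γ : ℕ → ℝ := fun n => ‖(T ^ n) h‖ ^ 2 with hγdef
  have hγrec : ∀ n, γ n - 2 * γ (n + 1) + γ (n + 2) = 0 := by
    intro n
    have hx := hrec ((T ^ n) h)
    have e1 : T ((T ^ n) h) = (T ^ (n + 1)) h := by
      rw [pow_succ']; rfl
    have e2 : (T ^ 2) ((T ^ n) h) = (T ^ (n + 2)) h := by
      rw [hpow 2 n, Nat.add_comm]
    rw [e1, e2] at hx
    exact hx
  set b : ℝ := ‖T h‖ ^ 2 - ‖h‖ ^ 2 with hbdef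
  have hb0 : γ 0 = ‖h‖ ^ 2 := by simp [hγdef]
  have hb1 : γ 1 = ‖T h‖ ^ 2 := by simp [hγdef]
  have key : ∀ n, γ n = ‖h‖ ^ 2 + n * b ∧ γ (n + 1) = ‖h‖ ^ 2 + ((n : ℝ) + 1) * b := by
    intro n
    induction n with
    | zero => exact ⟨by simp [hb0], by rw [hb1]; push_cast; ring⟩
    | succ n ih =>
      obtain ⟨ih1, ih2⟩ := ih
      have hr := hγrec n
      constructor
      · push_cast
        linarith
      · push_cast
        
        linarith
  have haff : ∀ n, γ n = ‖h‖ ^ 2 + n * b := fun n => (key n).1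
  refine ⟨haff, ?_⟩
  by_contra hb
  push_neg at hb
  obtain ⟨n, hn⟩ := exists_nat_gt (‖h‖ ^ 2 / (-b))
  rw [div_lt_iff₀ (by linarith : (0 : ℝ) < -b)] at hn
  have h1 : γ n = ‖h‖ ^ 2 + n * b := haff n
  have h2 : 0 ≤ γ n := by positivity
  nlinarith

/-- (i) ⇒ (ii). -/
lemma key1 (T : H →L[ℂ] H) (hB : bOp T 2 = 0) :
    (∀ m : ℕ, 1 ≤ m → (-(bOp T m)).IsPositive) ∧ IsCPDOp T := by
  constructor
  · intro m hm
    refine ⟨ContinuousLinearMap.isSelfAdjoint_iff_isSymmetric.mp (bOp_isSelfAdjoint T m).neg, fun x => ?_⟩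
    obtain ⟨haff, hb⟩ := affine_of_bOp_two_eq_zero T hB x
    have hre : (-(bOp T m)).reApplyInnerSelf x
        = -(∑ k ∈ Finset.range (m + 1), (-1 : ℝ) ^ k * m.choose k * ‖(T ^ k) x‖ ^ 2) := by
      have hd : (-(bOp T m)).reApplyInnerSelf x
          = RCLike.re (@inner ℂ H _ ((-(bOp T m)) x) x) := rfl
      rw [hd, ContinuousLinearMap.neg_apply, inner_neg_left, inner_bOp,
        ← Complex.ofReal_neg]
      simp only [RCLike.re_to_complex, Complex.ofReal_re]
    rw [hre]
    have hsplit : ∑ k ∈ Finset.range (m + 1), (-1 : ℝ) ^ k * m.choose k * ‖(T ^ k) x‖ ^ 2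
        = ‖x‖ ^ 2 * (∑ k ∈ Finset.range (m + 1), (-1 : ℝ) ^ k * m.choose k)
          + (‖T x‖ ^ 2 - ‖x‖ ^ 2) *
            (∑ k ∈ Finset.range (m + 1), (-1 : ℝ) ^ k * k * m.choose k) := by
      rw [Finset.mul_sum, Finset.mul_sum, ← Finset.sum_add_distrib]
      refine Finset.sum_congr rfl fun k _ => ?_
      rw [haff k]
      ring
    rw [hsplit]
    rcases eq_or_lt_of_le hm with h1 | h2
    · -- m = 1
      obtain rfl : m = 1 := h1.symm
      rw [altS0 (by norm_num)]
      have : (∑ k ∈ Finset.range 2, (-1 : ℝ) ^ k * k * (Nat.choose 1 k)) = -1 := by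
        rw [Finset.sum_range_succ, Finset.sum_range_succ, Finset.sum_range_zero]
        norm_num
      rw [this]
      nlinarith [hb]
    · -- m ≥ 2
      have hm2 : 2 ≤ m := h2
      rw [altS0 (by omega), altS1 hm2]
      norm_num
  · intro h
    obtain ⟨haff, _⟩ := affine_of_bOp_two_eq_zero T hB h
    have heq : (fun n => ‖(T ^ n) h‖ ^ 2)
        = fun n : ℕ => ‖h‖ ^ 2 + n * (‖T h‖ ^ 2 - ‖h‖ ^ 2) := funext haff
    show IsCPDSeq fun n => ‖(T ^ n) h‖ ^ 2
    rw [heq]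
    exact isCPDSeq_affine _ _

/-- (iii) ⇒ (i). -/
lemma key2 (T : H →L[ℂ] H) (h2 : (-(bOp T 2)).IsPositive) (hc : IsCPDOp T) :
    bOp T 2 = 0 := by
  have hzero : ∀ x : H, @inner ℂ H _ ((bOp T 2) x) x = 0 := by
    intro x
    set r : ℝ := ∑ k ∈ Finset.range (2 + 1), (-1 : ℝ) ^ k * ((2 : ℕ).choose k) * ‖(T ^ k) x‖ ^ 2
      with hrdef
    have hinner := inner_bOp T 2 x
    have hle : r ≤ 0 := by
      have hp := h2.2 x
      have hd : (-(bOp T 2)).reApplyInnerSelf x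
          = RCLike.re (@inner ℂ H _ ((-(bOp T 2)) x) x) := rfl
      rw [hd, ContinuousLinearMap.neg_apply, inner_neg_left, hinner,
        ← Complex.ofReal_neg] at hp
      simp only [RCLike.re_to_complex, Complex.ofReal_re] at hp
      linarith
    have hge : 0 ≤ r := by
      have hl := hc x 1 (fun i => if i = 0 then 1 else if i = 1 then -1 else 0)
        (by rw [Finset.sum_range_succ, Finset.sum_range_succ, Finset.sum_range_zero]; norm_num)
      have hcalc : (∑ i ∈ Finset.range 2, ∑ j ∈ Finset.range 2,
          ((‖(T ^ (i + j)) x‖ ^ 2 : ℝ) : ℂ) *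
            (fun i => if i = 0 then (1 : ℂ) else if i = 1 then -1 else 0) i *
            (starRingEnd ℂ) ((fun i => if i = 0 then (1 : ℂ) else if i = 1 then -1 else 0) j))
          = ((r : ℝ) : ℂ) := by
        rw [hrdef]
        simp only [Finset.sum_range_succ, Finset.sum_range_zero]
        norm_num
        ring
      rw [hcalc] at hl
      exact_mod_cast hl
    have hr0 : r = 0 := le_antisymm hle hge
    rw [hinner, ← hrdef, hr0]
    norm_num
  have h0 : ((bOp T 2 : H →L[ℂ] H) : H →ₗ[ℂ] H) = 0 :=
    (inner_map_self_eq_zero _).mp hzero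
  exact ContinuousLinearMap.coe_injective (by rw [h0]; rfl)

end OpLemmas

/-- Proposition `cpd-ch`: for `T ∈ B(H)` the following are equivalent: (i) `T` is a 2-isometry
(`B₂(T) = 0`); (ii) `T` is completely hyperexpansive (`B_m(T) ≤ 0` for all `m ∈ ℕ`) and CPD;
(iii) `T` is 2-hyperexpansive (`B₂(T) ≤ 0`) and CPD. -/
theorem two_isometry_iff_hyperexpansive_cpd {H : Type*} [NormedAddCommGroup H]
    [InnerProductSpace ℂ H] [CompleteSpace H] (T : H →L[ℂ] H) :
    (bOp T 2 = 0 ↔ ((∀ m : ℕ, 1 ≤ m → (-(bOp T m)).IsPositive) ∧ IsCPDOp T)) ∧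
    (((∀ m : ℕ, 1 ≤ m → (-(bOp T m)).IsPositive) ∧ IsCPDOp T) ↔
      ((-(bOp T 2)).IsPositive ∧ IsCPDOp T)) := by
  constructor
  · constructor
    · exact key1 T
    · rintro ⟨hall, hcpd⟩
      exact key2 T (hall 2 (by norm_num)) hcpd
  · constructor
    · rintro ⟨hall, hcpd⟩
      exact ⟨hall 2 (by norm_num), hcpd⟩
    · rintro ⟨h2, hcpd⟩
      exact key1 T (key2 T h2 hcpd)

end
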